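/- Let ν₁,…,νₙ ∈ ℂ be the roots, counted with algebraic multiplicity, of the characteristic polynomial of τ·L·R. Then for every λ ∈ ℂ, det(λ·I_{3n} − A) = ∏_{l=1}^{n} g_{ν_l}(λ). In particular, μ ∈ ℂ is an eigenvalue of A if and only if g_ν(μ) = 0 for some complex eigenvalue ν of τ·L·R. -/

import Mathlib

open Matrix Polynomial

/-- The 3n×3n transition matrix of the skewless clock-synchronization algorithm. -/
noncomputable def Amat (n : ℕ) (τ κ₁ κ₂ p : ℝ) (L R : Matrix (Fin n) (Fin n) ℝ) :
    Matrix (Fin n ⊕ Fin n ⊕ Fin n) (Fin n ⊕ Fin n ⊕ Fin n) ℝ :=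
  Matrix.fromBlocks 1 (Matrix.fromCols (τ • R) 0)
    (Matrix.fromRows ((-κ₁) • L) ((-p) • L))
    (Matrix.fromBlocks 1 ((-κ₂) • (1 : Matrix (Fin n) (Fin n) ℝ)) 0
      ((1 - p) • (1 : Matrix (Fin n) (Fin n) ℝ)))

/-- The cubic `g_ν(λ) = (λ−1)²(λ−1+p) + ((λ−1)κ₁ + p(κ₁−κ₂))ν`. -/
noncomputable def gval (κ₁ κ₂ p : ℝ) (ν lam : ℂ) : ℂ :=
  (lam - 1) ^ 2 * (lam - 1 + (p : ℂ)) +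
    ((lam - 1) * (κ₁ : ℂ) + (p : ℂ) * ((κ₁ : ℂ) - (κ₂ : ℂ))) * ν

lemma evalchar {m : Type*} [Fintype m] [DecidableEq m] (M : Matrix m m ℂ) (t : ℂ) :
    M.charpoly.eval t = (t • (1 : Matrix m m ℂ) - M).det := by
  have : M.charpoly.eval t = (Polynomial.evalRingHom t) M.charpoly := rfl
  rw [this, Matrix.charpoly, RingHom.map_det]
  congr 1
  ext i j
  by_cases h : i = j
  · subst h; simp [Matrix.charmatrix_apply, Matrix.one_apply]
  · simp [Matrix.charmatrix_apply, Matrix.one_apply, h]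

lemma blockdec (n : ℕ) (τ κ₁ κ₂ p : ℝ) (L R : Matrix (Fin n) (Fin n) ℝ) (lam : ℂ) :
    lam • (1 : Matrix (Fin n ⊕ Fin n ⊕ Fin n) (Fin n ⊕ Fin n ⊕ Fin n) ℂ)
        - (Amat n τ κ₁ κ₂ p L R).map Complex.ofReal
      = Matrix.fromBlocks ((lam - 1) • 1)
          (Matrix.fromCols ((-(τ:ℂ)) • R.map Complex.ofReal) 0)
          (Matrix.fromRows ((κ₁:ℂ) • L.map Complex.ofReal) ((p:ℂ) • L.map Complex.ofReal))
          (Matrix.fromBlocks ((lam - 1) • 1) ((κ₂:ℂ) • 1) 0 ((lam - 1 + (p:ℂ)) • 1)) := by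
  ext i j
  rcases i with i | i | i <;> rcases j with j | j | j <;>
    simp [Amat, Matrix.fromBlocks, Matrix.fromCols, Matrix.fromRows_apply_inl,
      Matrix.fromRows_apply_inr, Matrix.map_apply,
      Matrix.one_apply, mul_ite, apply_ite Complex.ofReal] <;>
    split_ifs <;> push_cast <;> ring

lemma prodToDet {n : ℕ} (M : Matrix (Fin n) (Fin n) ℂ) (ν : Fin n → ℂ)
    (hev : ∀ t : ℂ, (t • (1 : Matrix (Fin n) (Fin n) ℂ) - M).det = ∏ l : Fin n, (t - ν l))
    (x c : ℂ) :
    (x • (1 : Matrix (Fin n) (Fin n) ℂ) + c • M).det = ∏ l : Fin n, (x + c * ν l) := by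
  rcases eq_or_ne c 0 with rfl | hc
  · simp [Matrix.det_smul]
  · have key : x • (1 : Matrix (Fin n) (Fin n) ℂ) + c • M
        = (-c) • ((-x / c) • (1 : Matrix (Fin n) (Fin n) ℂ) - M) := by
      have h1 : (-c) * (-x / c) = x := by field_simp
      rw [smul_sub, smul_smul, h1, neg_smul c, sub_neg_eq_add]
    rw [key, Matrix.det_smul, hev]
    have h2 : ∀ l : Fin n, x + c * ν l = (-c) * (-x / c - ν l) := by
      intro l; field_simp; ring
    rw [Finset.prod_congr rfl (fun l _ => h2 l), Finset.prod_mul_distrib,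
      Finset.prod_const, Finset.card_univ, Fintype.card_fin]

lemma smul1_mul_smul1 {n : ℕ} (x y : ℂ) (M : Matrix (Fin n) (Fin n) ℂ) :
    (x • (1 : Matrix (Fin n) (Fin n) ℂ)) * (y • M) = (x * y) • M := by
  rw [Matrix.smul_mul, Matrix.mul_smul, smul_smul, Matrix.one_mul]

lemma smulM_mul_smul1 {n : ℕ} (x y : ℂ) (M : Matrix (Fin n) (Fin n) ℂ) :
    (x • M) * (y • (1 : Matrix (Fin n) (Fin n) ℂ)) = (x * y) • M := by
  rw [Matrix.smul_mul, Matrix.mul_smul, smul_smul, Matrix.mul_one]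

lemma detblock {n : ℕ} (Lc Rc : Matrix (Fin n) (Fin n) ℂ) (τ κ₁ κ₂ p a b : ℂ)
    (hab : b = a + p) (ha : a ≠ 0) (hb0 : b ≠ 0) :
    (Matrix.fromBlocks (a • 1)
        (Matrix.fromCols ((-τ) • Rc) 0)
        (Matrix.fromRows (κ₁ • Lc) (p • Lc))
        (Matrix.fromBlocks (a • 1) (κ₂ • 1) 0 (b • 1))).det
      = ((a ^ 2 * b) • (1 : Matrix (Fin n) (Fin n) ℂ)
          + (τ * (b * κ₁ - p * κ₂)) • (Lc * Rc)).det := by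
  set D := Matrix.fromBlocks (a • (1 : Matrix (Fin n) (Fin n) ℂ))
      (κ₂ • (1 : Matrix (Fin n) (Fin n) ℂ)) 0 (b • (1 : Matrix (Fin n) (Fin n) ℂ)) with hD
  set E := Matrix.fromBlocks (a⁻¹ • (1 : Matrix (Fin n) (Fin n) ℂ))
      ((-(a⁻¹ * κ₂ * b⁻¹)) • (1 : Matrix (Fin n) (Fin n) ℂ)) 0
      (b⁻¹ • (1 : Matrix (Fin n) (Fin n) ℂ)) with hE
  have hDE : D * E = 1 := by
    rw [hD, hE, Matrix.fromBlocks_multiply]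
    simp only [smul1_mul_smul1, Matrix.mul_zero, Matrix.zero_mul, add_zero, zero_add,
      ← add_smul]
    have h0 : a * -(a⁻¹ * κ₂ * b⁻¹) + κ₂ * b⁻¹ = 0 := by field_simp; ring
    rw [mul_inv_cancel₀ ha, mul_inv_cancel₀ hb0, h0]
    simp [Matrix.fromBlocks_one]
  haveI : Invertible D := invertibleOfRightInverse D E hDE
  have hinv : ⅟D = E := invOf_eq_right_inv hDE
  rw [Matrix.det_fromBlocks₂₂, hinv, hE]
  have hBE : Matrix.fromCols ((-τ) • Rc) (0 : Matrix (Fin n) (Fin n) ℂ) * Matrix.fromBlocks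
      (a⁻¹ • (1 : Matrix (Fin n) (Fin n) ℂ))
      ((-(a⁻¹ * κ₂ * b⁻¹)) • (1 : Matrix (Fin n) (Fin n) ℂ)) 0
      (b⁻¹ • (1 : Matrix (Fin n) (Fin n) ℂ))
      = Matrix.fromCols ((-τ * a⁻¹) • Rc) ((-τ * -(a⁻¹ * κ₂ * b⁻¹)) • Rc) := by
    rw [Matrix.fromCols_mul_fromBlocks, smulM_mul_smul1, smulM_mul_smul1,
      Matrix.zero_mul, Matrix.zero_mul, add_zero, add_zero]
  rw [Matrix.mul_assoc, ← Matrix.mul_assoc _ _ (Matrix.fromRows (κ₁ • Lc) (p • Lc)), hBE,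
    Matrix.fromCols_mul_fromRows]
  have hRL : ((-τ * a⁻¹) • Rc) * (κ₁ • Lc) + ((-τ * -(a⁻¹ * κ₂ * b⁻¹)) • Rc) * (p • Lc)
      = ((-τ * a⁻¹ * κ₁) + (-τ * -(a⁻¹ * κ₂ * b⁻¹) * p)) • (Rc * Lc) := by
    rw [Matrix.smul_mul, Matrix.mul_smul, Matrix.smul_mul, Matrix.mul_smul,
      smul_smul, smul_smul, add_smul]
  rw [hRL]
  have hSchur : a • (1 : Matrix (Fin n) (Fin n) ℂ)
      - ((-τ * a⁻¹ * κ₁) + (-τ * -(a⁻¹ * κ₂ * b⁻¹) * p)) • (Rc * Lc)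
      = a • 1 + ((τ * a⁻¹ * κ₁) - (τ * (a⁻¹ * κ₂ * b⁻¹) * p)) • (Rc * Lc) := by
    rw [sub_eq_add_neg, ← neg_smul]
    congr 1
    ring
  rw [hSchur]
  have hdetD : D.det = a ^ n * b ^ n := by
    rw [hD, Matrix.det_fromBlocks_zero₂₁, Matrix.det_smul, Matrix.det_smul, Matrix.det_one,
      Fintype.card_fin]
    ring
  rw [hdetD]
  set d := (τ * a⁻¹ * κ₁) - (τ * (a⁻¹ * κ₂ * b⁻¹) * p) with hd
  have h1 : a ^ n * b ^ n * (a • (1 : Matrix (Fin n) (Fin n) ℂ) + d • (Rc * Lc)).det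
      = ((a * b) • (a • (1 : Matrix (Fin n) (Fin n) ℂ) + d • (Rc * Lc))).det := by
    rw [Matrix.det_smul, Fintype.card_fin, mul_pow]
  rw [h1, smul_add, smul_smul, smul_smul]
  have h2 : a * b * d = τ * (b * κ₁ - p * κ₂) := by rw [hd]; field_simp
  rw [h2]
  -- now swap Rc * Lc to Lc * Rc
  set x := a ^ 2 * b with hx
  have hxab : a * b * a = x := by rw [hx]; ring
  rw [hxab]
  have hxne : x ≠ 0 := by rw [hx]; exact mul_ne_zero (pow_ne_zero 2 ha) hb0
  set e := τ * (b * κ₁ - p * κ₂) with he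
  have key : ∀ G H : Matrix (Fin n) (Fin n) ℂ,
      (x • (1 : Matrix (Fin n) (Fin n) ℂ) + e • (G * H)).det
        = x ^ n * (1 + ((e / x) • G) * H).det := by
    intro G H
    have : x • (1 : Matrix (Fin n) (Fin n) ℂ) + e • (G * H)
        = x • (1 + ((e / x) • G) * H) := by
      rw [smul_add, Matrix.smul_mul, smul_smul]
      congr 2
      field_simp
    rw [this, Matrix.det_smul, Fintype.card_fin]
  rw [key Rc Lc, key Lc Rc]
  congr 1
  rw [Matrix.det_one_add_mul_comm, Matrix.mul_smul, Matrix.smul_mul]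

/-- If `ν₁,…,νₙ` are the roots (with multiplicity) of the characteristic polynomial of
`τ·L·R`, then `det(λ I₃ₙ − A) = ∏ₗ g_{νₗ}(λ)`; in particular `μ` is an eigenvalue of `A`
iff `g_ν(μ) = 0` for some eigenvalue `ν` of `τ·L·R`. -/
theorem stmt1 (n : ℕ) (hn : 1 ≤ n) (τ κ₁ κ₂ p : ℝ)
    (L : Matrix (Fin n) (Fin n) ℝ) (r : Fin n → ℝ)
    (R : Matrix (Fin n) (Fin n) ℝ) (hR : R = Matrix.diagonal r)
    (ν : Fin n → ℂ)
    (hν : ((τ • (L * R)).map Complex.ofReal).charpoly = ∏ l : Fin n, (X - C (ν l))) :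
    (∀ lam : ℂ,
      (lam • (1 : Matrix (Fin n ⊕ Fin n ⊕ Fin n) (Fin n ⊕ Fin n ⊕ Fin n) ℂ)
          - (Amat n τ κ₁ κ₂ p L R).map Complex.ofReal).det
        = ∏ l : Fin n, gval κ₁ κ₂ p (ν l) lam) ∧
    (∀ μ : ℂ,
      ((Amat n τ κ₁ κ₂ p L R).map Complex.ofReal).charpoly.IsRoot μ ↔
        ∃ νe : ℂ, ((τ • (L * R)).map Complex.ofReal).charpoly.IsRoot νe ∧
          gval κ₁ κ₂ p νe μ = 0) := by
  set Lc := L.map Complex.ofReal with hLc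
  set Rc := R.map Complex.ofReal with hRc
  set Mc := (τ • (L * R)).map Complex.ofReal with hMcdef
  have hMc : Mc = (τ : ℂ) • (Lc * Rc) := by
    ext i j
    simp [hMcdef, hLc, hRc, Matrix.map_apply, Matrix.mul_apply, Finset.mul_sum]
  have hev : ∀ t : ℂ, (t • (1 : Matrix (Fin n) (Fin n) ℂ) - Mc).det
      = ∏ l : Fin n, (t - ν l) := by
    intro t
    rw [← evalchar, hν]
    simp [eval_prod]
  set P := ((Amat n τ κ₁ κ₂ p L R).map Complex.ofReal).charpoly with hP
  set Q := ∏ l : Fin n, ((X - 1) ^ 2 * (X - 1 + C (p : ℂ))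
      + ((X - 1) * C (κ₁ : ℂ) + C ((p : ℂ) * ((κ₁ : ℂ) - (κ₂ : ℂ)))) * C (ν l)) with hQ
  have hQeval : ∀ lam : ℂ, Q.eval lam = ∏ l : Fin n, gval κ₁ κ₂ p (ν l) lam := by
    intro lam
    rw [hQ, eval_prod]
    exact Finset.prod_congr rfl fun l _ => by simp [gval]
  have hPeval : ∀ lam : ℂ, P.eval lam
      = (lam • (1 : Matrix (Fin n ⊕ Fin n ⊕ Fin n) (Fin n ⊕ Fin n ⊕ Fin n) ℂ)
          - (Amat n τ κ₁ κ₂ p L R).map Complex.ofReal).det := fun lam => evalchar _ lam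
  have hgood : ∀ lam : ℂ, lam ≠ 1 → lam ≠ 1 - (p : ℂ) → P.eval lam = Q.eval lam := by
    intro lam h1 h2
    have ha : lam - 1 ≠ 0 := sub_ne_zero.mpr h1
    have hb : lam - 1 + (p : ℂ) ≠ 0 := by
      intro h
      exact h2 (by linear_combination h)
    rw [hPeval, blockdec, detblock Lc Rc _ _ _ _ _ _ rfl ha hb, hQeval]
    have hcoef : (↑τ * ((lam - 1 + ↑p) * ↑κ₁ - ↑p * ↑κ₂)) • (Lc * Rc)
        = ((lam - 1 + ↑p) * ↑κ₁ - ↑p * ↑κ₂) • Mc := by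
      rw [hMc, smul_smul]; ring_nf
    rw [hcoef, prodToDet Mc ν hev]
    exact Finset.prod_congr rfl fun l _ => by simp only [gval]; ring
  have hPQ : P = Q := by
    apply Polynomial.eq_of_infinite_eval_eq
    have hfin : ({1, 1 - (p : ℂ)} : Set ℂ).Finite := (Set.finite_singleton _).insert _
    have hsub : ({1, 1 - (p : ℂ)} : Set ℂ)ᶜ ⊆ {x : ℂ | P.eval x = Q.eval x} := by
      intro x hx
      simp only [Set.mem_compl_iff, Set.mem_insert_iff, Set.mem_singleton_iff, not_or] at hx
      exact hgood x hx.1 hx.2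
    exact hfin.infinite_compl.mono hsub
  have part1 : ∀ lam : ℂ,
      (lam • (1 : Matrix (Fin n ⊕ Fin n ⊕ Fin n) (Fin n ⊕ Fin n ⊕ Fin n) ℂ)
          - (Amat n τ κ₁ κ₂ p L R).map Complex.ofReal).det
        = ∏ l : Fin n, gval κ₁ κ₂ p (ν l) lam := by
    intro lam
    rw [← hPeval, hPQ, hQeval]
  refine ⟨part1, ?_⟩
  intro μ
  have hroot : P.IsRoot μ ↔ ∏ l : Fin n, gval κ₁ κ₂ p (ν l) μ = 0 := by
    rw [Polynomial.IsRoot, hPeval, part1]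
  rw [hroot]
  constructor
  · intro h
    obtain ⟨l, _, hl⟩ := Finset.prod_eq_zero_iff.mp h
    refine ⟨ν l, ?_, hl⟩
    rw [Polynomial.IsRoot, hν]
    simp only [eval_prod, eval_sub, eval_X, eval_C]
    exact Finset.prod_eq_zero (Finset.mem_univ l) (sub_self _)
  · rintro ⟨νe, hre, hg⟩
    rw [Polynomial.IsRoot, hν] at hre
    simp only [eval_prod, eval_sub, eval_X, eval_C] at hre
    obtain ⟨k, _, hk⟩ := Finset.prod_eq_zero_iff.mp hre
    have hek : νe = ν k := sub_eq_zero.mp hk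
    exact Finset.prod_eq_zero (Finset.mem_univ k) (hek ▸ hg)
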